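/- Let μ, ν > 0 and π ∈ (0,1). If for all integers x ≥ 1 the conditional zero-inflated mixture pmf equals the π-mixture of zero-truncated Poisson pmfs, i.e., (π e^{-μ} μ^x/x! + (1-π) e^{-ν} ν^x/x!)/(1 - π e^{-μ} - (1-π) e^{-ν}) = π μ^x/((e^μ - 1) x!) + (1-π) ν^x/((e^ν - 1) x!) for all x ≥ 1, then μ = ν. -/

import Mathlib

open Real

set_option maxHeartbeats 1000000 in

/-- If, for all `x ≥ 1`, the conditional zero-inflated mixture pmf equals the
`pp`-mixture of zero-truncated Poisson pmfs, then `μ = ν`. -/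
theorem zipm_eq_ztp_forces_eq (μ ν pp : ℝ) (hμ : 0 < μ) (hν : 0 < ν)
    (hpp0 : 0 < pp) (hpp1 : pp < 1)
    (h : ∀ x : ℕ, 1 ≤ x →
      (pp * Real.exp (-μ) * μ ^ x / x.factorial
          + (1 - pp) * Real.exp (-ν) * ν ^ x / x.factorial)
        / (1 - pp * Real.exp (-μ) - (1 - pp) * Real.exp (-ν))
      = pp * μ ^ x / ((Real.exp μ - 1) * x.factorial)
          + (1 - pp) * ν ^ x / ((Real.exp ν - 1) * x.factorial)) :
    μ = ν := by
  have ha : (1:ℝ) < Real.exp μ := by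
    rw [show (1:ℝ) = Real.exp 0 by simp]; exact Real.exp_lt_exp.mpr hμ
  have hb : (1:ℝ) < Real.exp ν := by
    rw [show (1:ℝ) = Real.exp 0 by simp]; exact Real.exp_lt_exp.mpr hν
  have hE1 : (0:ℝ) < Real.exp μ - 1 := by linarith
  have hE2 : (0:ℝ) < Real.exp ν - 1 := by linarith
  have ha0 : (0:ℝ) < Real.exp μ := Real.exp_pos μ
  have hb0 : (0:ℝ) < Real.exp ν := Real.exp_pos ν
  have hDa : pp * Real.exp (-μ) < pp := by
    rw [Real.exp_neg]; nlinarith [inv_lt_one_of_one_lt₀ ha]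
  have hDb : (1 - pp) * Real.exp (-ν) < 1 - pp := by
    rw [Real.exp_neg]; nlinarith [inv_lt_one_of_one_lt₀ hb]
  have hD : (0:ℝ) < 1 - pp * Real.exp (-μ) - (1 - pp) * Real.exp (-ν) := by linarith
  have h1 := h 1 le_rfl
  have h2 := h 2 (by norm_num)
  rw [Real.exp_neg, Real.exp_neg] at h1 h2 hD
  norm_num [Nat.factorial] at h1 h2
  rw [div_eq_iff (ne_of_gt hD)] at h1 h2
  field_simp at h1 h2
  have hab : Real.exp μ * Real.exp ν ≠ 0 := by positivity
  have e1 : pp * (1 - pp) * (Real.exp μ - Real.exp ν)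
      * (μ * (Real.exp ν - 1) - ν * (Real.exp μ - 1)) = 0 := by
    apply mul_left_cancel₀ hab
    linear_combination (Real.exp μ * Real.exp ν) * h1
  have e2 : pp * (1 - pp) * (Real.exp μ - Real.exp ν)
      * (μ ^ 2 * (Real.exp ν - 1) - ν ^ 2 * (Real.exp μ - 1)) = 0 := by
    apply mul_left_cancel₀ (by positivity : (8:ℝ) * (Real.exp μ * Real.exp ν) ≠ 0)
    linear_combination (8 * (Real.exp μ * Real.exp ν)) * h2
  rcases mul_eq_zero.mp e1 with hS | hT1
  · rcases mul_eq_zero.mp hS with hS' | hab'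
    · rcases mul_eq_zero.mp hS' with h' | h' <;> nlinarith
    · exact Real.exp_injective (by linarith)
  · rcases mul_eq_zero.mp e2 with hS | hT2
    · rcases mul_eq_zero.mp hS with hS' | hab'
      · rcases mul_eq_zero.mp hS' with h' | h' <;> nlinarith
      · exact Real.exp_injective (by linarith)
    · have key : ν * (Real.exp μ - 1) * (ν - μ) = 0 := by
        linear_combination μ * hT1 - hT2
      rcases mul_eq_zero.mp key with h' | h'
      · exfalso; rcases mul_eq_zero.mp h' with h'' | h'' <;> nlinarith
      · linarith
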